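/- arXiv:1404.1596 — 7 statements merged into one kernel-verified Lean document; each statement's English description precedes it below -/
import Mathlib

section
/- Let ω be a constant-coefficient presymplectic form on a real normed space E. Let f, g : E → ℝ be twice continuously differentiable with differentiable Hamiltonian vector fields X_f, X_g : E → E. Then the Lie bracket [X_f, X_g] is a Hamiltonian vector field of the function φ(x) := ω(X_g x, X_f x): for all x, w ∈ E, ω([X_f, X_g] x, w) = (fderiv ℝ φ x) w. In particular, Hamiltonian vector fields with respect to ω are closed under the Lie bracket. -/
/-- The Lie bracket of two Hamiltonian vector fields (with respect
to a constant-coefficient presymplectic form) is Hamiltonian, with Hamiltonian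
function `x ↦ ω (X_g x) (X_f x)`. -/
theorem lieBracket_hamiltonian
    {E : Type*} [NormedAddCommGroup E] [NormedSpace ℝ E]
    (ω : E →L[ℝ] E →L[ℝ] ℝ) (halt : ∀ v : E, ω v v = 0)
    (f g : E → ℝ) (hf : ContDiff ℝ 2 f) (hg : ContDiff ℝ 2 g)
    (Xf Xg : E → E) (hXf : Differentiable ℝ Xf) (hXg : Differentiable ℝ Xg)
    (hHf : ∀ x w : E, ω (Xf x) w = fderiv ℝ f x w)
    (hHg : ∀ x w : E, ω (Xg x) w = fderiv ℝ g x w)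
    (x w : E) :
    ω (VectorField.lieBracket ℝ Xf Xg x) w
      = fderiv ℝ (fun y => ω (Xg y) (Xf y)) x w := by
  -- antisymmetry
  have hanti : ∀ u v : E, ω u v = - ω v u := by
    intro u v
    have h := halt (u + v)
    simp only [map_add, ContinuousLinearMap.add_apply, halt] at h
    linarith
  set Df := fderiv ℝ Xf x with hDf
  set Dg := fderiv ℝ Xg x with hDg
  -- derivative of y ↦ ω (Xf y) is ω ∘ Df, similarly for g
  have key : ∀ (X : E → E) (hX : Differentiable ℝ X),
      fderiv ℝ (fun y => ω (X y)) x = (ω.comp (fderiv ℝ X x)) := by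
    intro X hX
    exact (ω.hasFDerivAt.comp x (hX x).hasFDerivAt).fderiv
  -- symmetry of second derivative: ω (Df v) w = ω (Df w) v
  have symm : ∀ (h : E → ℝ) (hh : ContDiff ℝ 2 h) (X : E → E)
      (hX : Differentiable ℝ X) (hH : ∀ x w : E, ω (X x) w = fderiv ℝ h x w)
      (v u : E), ω (fderiv ℝ X x v) u = ω (fderiv ℝ X x u) v := by
    intro h hh X hX hH v u
    have hsym := (hh.contDiffAt (x := x)).isSymmSndFDerivAt (by simp [minSmoothness_of_isRCLikeNormedField])
    have heq : (fun y => ω (X y)) = fderiv ℝ h := by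
      ext y u; exact hH y u
    have : fderiv ℝ (fun y => ω (X y)) x = fderiv ℝ (fderiv ℝ h) x := by rw [heq]
    rw [key X hX] at this
    have e1 : ω (fderiv ℝ X x v) u = fderiv ℝ (fderiv ℝ h) x v u := by
      rw [← this]; rfl
    have e2 : ω (fderiv ℝ X x u) v = fderiv ℝ (fderiv ℝ h) x u v := by
      rw [← this]; rfl
    rw [e1, e2, hsym v u]
  -- compute RHS derivative
  have hc : HasFDerivAt (fun y => ω (Xg y)) (ω.comp Dg) x :=
    ω.hasFDerivAt.comp x (hXg x).hasFDerivAt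
  have hrhs : HasFDerivAt (fun y => ω (Xg y) (Xf y))
      (((ω (Xg x)).comp Df) + (ω.comp Dg).flip (Xf x)) x :=
    hc.clm_apply (hXf x).hasFDerivAt
  rw [hrhs.fderiv]
  simp only [VectorField.lieBracket, ContinuousLinearMap.add_apply,
    ContinuousLinearMap.comp_apply, ContinuousLinearMap.flip_apply, map_sub,
    ContinuousLinearMap.sub_apply, ← hDf, ← hDg]
  have h1 : ω (Dg (Xf x)) w = ω (Dg w) (Xf x) := symm g hg Xg hXg hHg _ _
  have h2 : ω (Df (Xg x)) w = ω (Df w) (Xg x) := symm f hf Xf hXf hHf _ _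
  rw [h1, h2, hanti (Df w) (Xg x)]
  ring
end

section
/- Let ω be a constant-coefficient presymplectic form on a real normed space E. Let f, g, h : E → ℝ be twice continuously differentiable with differentiable Hamiltonian vector fields X_f, X_g, X_h. Setting {a,b}(x) := (fderiv ℝ a x)(X_b x), the Jacobi identity holds pointwise: (fderiv ℝ {f,g} x)(X_h x) + (fderiv ℝ {g,h} x)(X_f x) + (fderiv ℝ {h,f} x)(X_g x) = 0 for all x ∈ E. -/
section aux

variable {E : Type*} [NormedAddCommGroup E] [NormedSpace ℝ E]

lemma poisson_aux_symm (ω : E →L[ℝ] E →L[ℝ] ℝ)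
    (f : E → ℝ) (hf : ContDiff ℝ 2 f) (Xf : E → E)
    (hXf : Differentiable ℝ Xf)
    (hHf : ∀ x w : E, ω (Xf x) w = fderiv ℝ f x w)
    (x v w : E) :
    ω (fderiv ℝ Xf x v) w = ω (fderiv ℝ Xf x w) v := by
  have hder : ∀ y, HasFDerivAt f (fderiv ℝ f y) y := fun y =>
    (hf.differentiable (by norm_num) y).hasFDerivAt
  have heq : (fun y => fderiv ℝ f y) = fun y => ω (Xf y) :=
    funext fun y => ContinuousLinearMap.ext fun w => (hHf y w).symm
  have h2 : HasFDerivAt (fun y => fderiv ℝ f y) (ω.comp (fderiv ℝ Xf x)) x := by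
    rw [heq]
    exact ω.hasFDerivAt.comp x (hXf x).hasFDerivAt
  exact second_derivative_symmetric hder h2 v w

lemma poisson_aux_deriv (ω : E →L[ℝ] E →L[ℝ] ℝ)
    (F G : E → E) (hF : Differentiable ℝ F) (hG : Differentiable ℝ G)
    (x v : E) :
    fderiv ℝ (fun y => ω (F y) (G y)) x v
      = ω (fderiv ℝ F x v) (G x) + ω (F x) (fderiv ℝ G x v) := by
  have h : HasFDerivAt (fun y => ω (F y) (G y))
      ((ω.isBoundedBilinearMap.deriv (F x, G x)).comp
        ((fderiv ℝ F x).prod (fderiv ℝ G x))) x :=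
    HasFDerivAt.comp (g := fun p : E × E => ω p.1 p.2) x
      (ω.isBoundedBilinearMap.hasFDerivAt (F x, G x))
      (HasFDerivAt.prodMk (hF x).hasFDerivAt (hG x).hasFDerivAt)
  rw [h.fderiv]
  simp [IsBoundedBilinearMap.deriv_apply]
  ring

end aux

/-- Pointwise Jacobi identity for the Poisson bracket
`{a,b}(x) = (fderiv ℝ a x) (X_b x)` associated with a constant-coefficient
presymplectic form. -/
theorem poisson_bracket_jacobi
    {E : Type*} [NormedAddCommGroup E] [NormedSpace ℝ E]
    (ω : E →L[ℝ] E →L[ℝ] ℝ) (halt : ∀ v : E, ω v v = 0)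
    (f g h : E → ℝ) (hf : ContDiff ℝ 2 f) (hg : ContDiff ℝ 2 g)
    (hh : ContDiff ℝ 2 h)
    (Xf Xg Xh : E → E)
    (hXf : Differentiable ℝ Xf) (hXg : Differentiable ℝ Xg)
    (hXh : Differentiable ℝ Xh)
    (hHf : ∀ x w : E, ω (Xf x) w = fderiv ℝ f x w)
    (hHg : ∀ x w : E, ω (Xg x) w = fderiv ℝ g x w)
    (hHh : ∀ x w : E, ω (Xh x) w = fderiv ℝ h x w)
    (x : E) :
    fderiv ℝ (fun y => fderiv ℝ f y (Xg y)) x (Xh x)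
      + fderiv ℝ (fun y => fderiv ℝ g y (Xh y)) x (Xf x)
      + fderiv ℝ (fun y => fderiv ℝ h y (Xf y)) x (Xg x) = 0 := by
  have hanti : ∀ u v : E, ω u v = - ω v u := by
    intro u v
    have := halt (u + v)
    simp only [map_add, ContinuousLinearMap.add_apply, halt u, halt v] at this
    linarith
  have e1 : (fun y => fderiv ℝ f y (Xg y)) = fun y => ω (Xf y) (Xg y) :=
    funext fun y => (hHf y (Xg y)).symm
  have e2 : (fun y => fderiv ℝ g y (Xh y)) = fun y => ω (Xg y) (Xh y) :=
    funext fun y => (hHg y (Xh y)).symm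
  have e3 : (fun y => fderiv ℝ h y (Xf y)) = fun y => ω (Xh y) (Xf y) :=
    funext fun y => (hHh y (Xf y)).symm
  rw [e1, e2, e3,
    poisson_aux_deriv ω Xf Xg hXf hXg x (Xh x),
    poisson_aux_deriv ω Xg Xh hXg hXh x (Xf x),
    poisson_aux_deriv ω Xh Xf hXh hXf x (Xg x)]
  have sf := poisson_aux_symm ω f hf Xf hXf hHf x
  have sg := poisson_aux_symm ω g hg Xg hXg hHg x
  have sh := poisson_aux_symm ω h hh Xh hXh hHh x
  have a1 : ω (Xf x) (fderiv ℝ Xg x (Xh x)) = - ω (fderiv ℝ Xg x (Xf x)) (Xh x) := by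
    rw [hanti, sg]
  have a2 : ω (Xg x) (fderiv ℝ Xh x (Xf x)) = - ω (fderiv ℝ Xh x (Xg x)) (Xf x) := by
    rw [hanti, sh]
  have a3 : ω (Xh x) (fderiv ℝ Xf x (Xg x)) = - ω (fderiv ℝ Xf x (Xh x)) (Xg x) := by
    rw [hanti, sf]
  rw [a1, a2, a3]
  ring
end

section
/- Let ω be a constant-coefficient presymplectic form on a real normed space E, and let X : ℝ → E → E be a t-dependent vector field such that each X_t is a Hamiltonian vector field (with respect to ω) of some twice continuously differentiable function. Let f, g : E → ℝ be twice continuously differentiable with differentiable Hamiltonian vector fields X_f, X_g, and set {f,g}(x) := (fderiv ℝ f x)(X_g x). If f and g are t-independent constants of motion of X, i.e. (fderiv ℝ f x)(X_t x) = 0 and (fderiv ℝ g x)(X_t x) = 0 for all t and x, then {f,g} is again a t-independent constant of motion of X: (fderiv ℝ {f,g} x)(X_t x) = 0 for all t and x. -/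
private lemma omega_antisymm {E : Type*} [NormedAddCommGroup E] [NormedSpace ℝ E]
    (ω : E →L[ℝ] E →L[ℝ] ℝ) (halt : ∀ v : E, ω v v = 0) (a b : E) :
    ω a b = - ω b a := by
  have h := halt (a + b)
  simp only [map_add, ContinuousLinearMap.add_apply, halt a, halt b] at h
  linarith

/-- For a C² function with Hamiltonian vector field Y (differentiable), the
second derivative is `ω.comp (fderiv Y x)` and is symmetric. -/
private lemma ham_symm {E : Type*} [NormedAddCommGroup E] [NormedSpace ℝ E]
    (ω : E →L[ℝ] E →L[ℝ] ℝ) (k : E → ℝ) (hk : ContDiff ℝ 2 k)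
    (Y : E → E) (hY : Differentiable ℝ Y)
    (hH : ∀ x w : E, ω (Y x) w = fderiv ℝ k x w) (x v w : E) :
    ω (fderiv ℝ Y x v) w = ω (fderiv ℝ Y x w) v := by
  have hke : fderiv ℝ k = fun y => ω (Y y) := by
    funext y
    exact ContinuousLinearMap.ext fun u => (hH y u).symm
  have hd2 : HasFDerivAt (fderiv ℝ k) (ω.comp (fderiv ℝ Y x)) x := by
    rw [hke]
    exact ω.hasFDerivAt.comp x (hY x).hasFDerivAt
  have hd1 : ∀ y, HasFDerivAt k (fderiv ℝ k y) y := fun y =>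
    (hk.differentiable two_ne_zero y).hasFDerivAt
  have := second_derivative_symmetric hd1 hd2 v w
  simpa using this

/-- The Poisson bracket of two t-independent constants of motion
of a t-dependent vector field whose instances are Hamiltonian (with respect to
a constant-coefficient presymplectic form) is again a t-independent constant
of motion. -/
theorem poisson_bracket_constant_of_motion
    {E : Type*} [NormedAddCommGroup E] [NormedSpace ℝ E]
    (ω : E →L[ℝ] E →L[ℝ] ℝ) (halt : ∀ v : E, ω v v = 0)
    (X : ℝ → E → E)
    (hX : ∀ t : ℝ, ∃ h : E → ℝ, ContDiff ℝ 2 h ∧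
      ∀ x w : E, ω (X t x) w = fderiv ℝ h x w)
    (f g : E → ℝ) (hf : ContDiff ℝ 2 f) (hg : ContDiff ℝ 2 g)
    (Xf Xg : E → E) (hXf : Differentiable ℝ Xf) (hXg : Differentiable ℝ Xg)
    (hHf : ∀ x w : E, ω (Xf x) w = fderiv ℝ f x w)
    (hHg : ∀ x w : E, ω (Xg x) w = fderiv ℝ g x w)
    (hfCM : ∀ t : ℝ, ∀ x : E, fderiv ℝ f x (X t x) = 0)
    (hgCM : ∀ t : ℝ, ∀ x : E, fderiv ℝ g x (X t x) = 0) :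
    ∀ t : ℝ, ∀ x : E,
      fderiv ℝ (fun y => fderiv ℝ f y (Xg y)) x (X t x) = 0 := by
  intro t x
  obtain ⟨h, hh2, hhH⟩ := hX t
  -- differentiability of the first derivatives
  have hfd : ∀ y, HasFDerivAt f (fderiv ℝ f y) y := fun y =>
    (hf.differentiable two_ne_zero y).hasFDerivAt
  have hhd1 : ∀ y, HasFDerivAt h (fderiv ℝ h y) y := fun y =>
    (hh2.differentiable two_ne_zero y).hasFDerivAt
  have hh' : Differentiable ℝ (fderiv ℝ h) :=
    (hh2.fderiv_right (m := 1) le_rfl).differentiable one_ne_zero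
  set Dh2 : E →L[ℝ] E →L[ℝ] ℝ := fderiv ℝ (fderiv ℝ h) x with hDh2
  have hhd2 : HasFDerivAt (fderiv ℝ h) Dh2 x := (hh' x).hasFDerivAt
  have symh : ∀ v w : E, Dh2 v w = Dh2 w v := fun v w =>
    second_derivative_symmetric hhd1 hhd2 v w
  -- the second derivative of f as ω ∘ (fderiv Xf)
  have hfe : fderiv ℝ f = fun y => ω (Xf y) := by
    funext y
    exact ContinuousLinearMap.ext fun u => (hHf y u).symm
  have hfd2 : HasFDerivAt (fderiv ℝ f) (ω.comp (fderiv ℝ Xf x)) x := by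
    rw [hfe]
    exact ω.hasFDerivAt.comp x (hXf x).hasFDerivAt
  -- conserved-quantity identities: dh(Xf) ≡ 0 and dh(Xg) ≡ 0
  have zf : (fun y => fderiv ℝ h y (Xf y)) = fun _ => (0 : ℝ) := by
    funext y
    have h1 : ω (X t y) (Xf y) = fderiv ℝ h y (Xf y) := hhH y (Xf y)
    have h2 : ω (Xf y) (X t y) = fderiv ℝ f y (X t y) := hHf y (X t y)
    have h3 := hfCM t y
    have h4 := omega_antisymm ω halt (X t y) (Xf y)
    rw [← h1, h4, h2, h3]
    simp
  have zg : (fun y => fderiv ℝ h y (Xg y)) = fun _ => (0 : ℝ) := by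
    funext y
    have h1 : ω (X t y) (Xg y) = fderiv ℝ h y (Xg y) := hhH y (Xg y)
    have h2 : ω (Xg y) (X t y) = fderiv ℝ g y (X t y) := hHg y (X t y)
    have h3 := hgCM t y
    have h4 := omega_antisymm ω halt (X t y) (Xg y)
    rw [← h1, h4, h2, h3]
    simp
  -- differentiate the zero functions
  have eqf : ∀ w : E, fderiv ℝ h x (fderiv ℝ Xf x w) + Dh2 w (Xf x) = 0 := by
    intro w
    have hF := hhd2.clm_apply (hXf x).hasFDerivAt
    rw [zf] at hF
    have h0 : HasFDerivAt (fun _ : E => (0 : ℝ)) (0 : E →L[ℝ] ℝ) x := hasFDerivAt_const 0 x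
    have := hF.unique h0
    have := congrArg (fun L : E →L[ℝ] ℝ => L w) this
    simpa using this
  have eqg : ∀ w : E, fderiv ℝ h x (fderiv ℝ Xg x w) + Dh2 w (Xg x) = 0 := by
    intro w
    have hF := hhd2.clm_apply (hXg x).hasFDerivAt
    rw [zg] at hF
    have h0 : HasFDerivAt (fun _ : E => (0 : ℝ)) (0 : E →L[ℝ] ℝ) x := hasFDerivAt_const 0 x
    have := hF.unique h0
    have := congrArg (fun L : E →L[ℝ] ℝ => L w) this
    simpa using this
  -- key identity (*)
  have key : ω (X t x) (fderiv ℝ Xg x (Xf x)) = ω (X t x) (fderiv ℝ Xf x (Xg x)) := by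
    have e1 := eqg (Xf x)
    have e2 := eqf (Xg x)
    have e3 := symh (Xf x) (Xg x)
    have r1 : ω (X t x) (fderiv ℝ Xg x (Xf x)) = fderiv ℝ h x (fderiv ℝ Xg x (Xf x)) :=
      hhH x _
    have r2 : ω (X t x) (fderiv ℝ Xf x (Xg x)) = fderiv ℝ h x (fderiv ℝ Xf x (Xg x)) :=
      hhH x _
    rw [r1, r2]
    linarith
  -- compute the derivative of the Poisson bracket
  have hF : HasFDerivAt (fun y => fderiv ℝ f y (Xg y))
      ((fderiv ℝ f x).comp (fderiv ℝ Xg x) + (ω.comp (fderiv ℝ Xf x)).flip (Xg x)) x :=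
    hfd2.clm_apply (hXg x).hasFDerivAt
  rw [hF.fderiv]
  have symf := ham_symm ω f hf Xf hXf hHf x
  have symg := ham_symm ω g hg Xg hXg hHg x
  have term1 : fderiv ℝ f x (fderiv ℝ Xg x (X t x)) = ω (X t x) (fderiv ℝ Xg x (Xf x)) := by
    rw [← hHf x]
    rw [omega_antisymm ω halt (Xf x) (fderiv ℝ Xg x (X t x)),
      symg (X t x) (Xf x),
      omega_antisymm ω halt (fderiv ℝ Xg x (Xf x)) (X t x)]
    ring
  have term2 : ω (fderiv ℝ Xf x (X t x)) (Xg x) = - ω (X t x) (fderiv ℝ Xf x (Xg x)) := by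
    rw [symf (X t x) (Xg x)]
    exact omega_antisymm ω halt _ _
  simp only [ContinuousLinearMap.add_apply, ContinuousLinearMap.comp_apply,
    ContinuousLinearMap.flip_apply]
  rw [term1, term2, key]
  ring
end

section
/- Let ω be a constant-coefficient presymplectic form on a real normed space E. Let Y : E → E be a differentiable Hamiltonian vector field of some twice continuously differentiable function h, and let Z : E → E be a differentiable map taking values in the kernel of ω, i.e. ω(Z x, w) = 0 for all x, w ∈ E. Then the Lie bracket [Y, Z] also takes values in the kernel of ω: ω([Y, Z] x, w) = 0 for all x, w ∈ E. -/
/-- The kernel of a constant-coefficient presymplectic form is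
stable under the Lie bracket with Hamiltonian vector fields. -/
theorem kernel_stable_under_hamiltonian
    {E : Type*} [NormedAddCommGroup E] [NormedSpace ℝ E]
    (ω : E →L[ℝ] E →L[ℝ] ℝ) (halt : ∀ v : E, ω v v = 0)
    (h : E → ℝ) (hh : ContDiff ℝ 2 h)
    (Y : E → E) (hY : Differentiable ℝ Y)
    (hHam : ∀ x w : E, ω (Y x) w = fderiv ℝ h x w)
    (Z : E → E) (hZ : Differentiable ℝ Z)
    (hker : ∀ x w : E, ω (Z x) w = 0) :
    ∀ x w : E, ω (VectorField.lieBracket ℝ Y Z x) w = 0 := by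
  intro x w
  have hskew : ∀ a b : E, ω a b = - ω b a := by
    intro a b
    have := halt (a + b)
    simp [map_add, halt] at this
    linarith
  -- kernel of derivative of Z
  have hZker : ∀ u w : E, ω (fderiv ℝ Z x u) w = 0 := by
    intro u w
    set l : E →L[ℝ] ℝ := ω.flip w with hl
    have h1 : HasFDerivAt (fun y => l (Z y)) (l.comp (fderiv ℝ Z x)) x :=
      (l.hasFDerivAt).comp x (hZ x).hasFDerivAt
    have heq : (fun y => l (Z y)) = fun _ : E => (0 : ℝ) := by
      funext y; simpa [hl] using hker y w
    rw [heq] at h1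
    have h2 : HasFDerivAt (fun _ : E => (0 : ℝ)) (0 : E →L[ℝ] ℝ) x :=
      hasFDerivAt_const 0 x
    have := h1.unique h2
    have := congrFun (congrArg (fun f : E →L[ℝ] ℝ => (f : E → ℝ)) this) u
    simpa [hl] using this
  -- differentiability of fderiv h
  have hdh : Differentiable ℝ (fderiv ℝ h) :=
    (hh.fderiv_right (m := 1) (by norm_num)).differentiable one_ne_zero
  set f'' : E →L[ℝ] E →L[ℝ] ℝ := fderiv ℝ (fderiv ℝ h) x with hf''
  have hsymm : ∀ u v : E, f'' u v = f'' v u := by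
    intro u v
    exact second_derivative_symmetric
      (fun y => ((hh.differentiable two_ne_zero) y).hasFDerivAt)
      ((hdh x).hasFDerivAt) u v
  -- derivative of Y relates to second derivative of h
  have hYder : ∀ u w : E, ω (fderiv ℝ Y x u) w = f'' u w := by
    intro u w
    set l : E →L[ℝ] ℝ := ω.flip w with hl
    have h1 : HasFDerivAt (fun y => l (Y y)) (l.comp (fderiv ℝ Y x)) x :=
      (l.hasFDerivAt).comp x (hY x).hasFDerivAt
    have heq : (fun y => l (Y y)) = fun y => (ContinuousLinearMap.apply ℝ ℝ w) (fderiv ℝ h y) := by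
      funext y; simpa [hl] using hHam y w
    rw [heq] at h1
    have h2 : HasFDerivAt (fun y => (ContinuousLinearMap.apply ℝ ℝ w) (fderiv ℝ h y))
        ((ContinuousLinearMap.apply ℝ ℝ w).comp f'') x :=
      ((ContinuousLinearMap.apply ℝ ℝ w).hasFDerivAt).comp x (hdh x).hasFDerivAt
    have := h1.unique h2
    have := congrFun (congrArg (fun f : E →L[ℝ] ℝ => (f : E → ℝ)) this) u
    simpa [hl] using this
  have key : ω (fderiv ℝ Y x (Z x)) w = 0 := by
    rw [hYder, hsymm, ← hYder, hskew, hker]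
    simp
  rw [VectorField.lieBracket]
  simp [map_sub, hZker, key]
end

section
/- Define vector fields on ℝ⁴ by X₁(x) = (1,1,1,1), X₂(x) = x, and X₃(x) = (x₁², x₂², x₃², x₄²). Then, for every x ∈ ℝ⁴, [X₁,X₂](x) = X₁(x), [X₁,X₃](x) = 2 • X₂(x), and [X₂,X₃](x) = X₃(x). Hence X₁, X₂, X₃ span a Vessiot–Guldberg Lie algebra isomorphic to sl(2,ℝ) for the system of four coupled Riccati equations dxᵢ/dt = a(t) + b(t)xᵢ + c(t)xᵢ². -/
lemma sq_hasFDerivAt (x : Fin 4 → ℝ) :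
    HasFDerivAt (fun y : Fin 4 → ℝ => fun i => (y i) ^ 2)
      ((ContinuousLinearMap.pi fun i => (2 * x i) • ContinuousLinearMap.proj i :
        (Fin 4 → ℝ) →L[ℝ] (Fin 4 → ℝ))) x := by
  rw [hasFDerivAt_pi']
  intro i
  have hp := hasFDerivAt_pi'.1 (hasFDerivAt_id (𝕜 := ℝ) x) i
  have h := hp.mul hp
  have : (fun y : Fin 4 → ℝ => y i * y i) = fun y : Fin 4 → ℝ => y i ^ 2 := by
    funext y; ring
  simp only [id_eq] at h
  rw [show ((fun y : Fin 4 → ℝ => y i) * fun y => y i) = fun y : Fin 4 → ℝ => y i ^ 2 from this] at h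
  refine h.congr_fderiv ?_
  ext v
  simp [ContinuousLinearMap.proj_pi, two_mul]
  ring

/-- The vector fields `X₁ = Σ ∂/∂xᵢ`, `X₂ = Σ xᵢ ∂/∂xᵢ`,
`X₃ = Σ xᵢ² ∂/∂xᵢ` on `ℝ⁴` satisfy the `sl(2,ℝ)` commutation relations
`[X₁,X₂] = X₁`, `[X₁,X₃] = 2X₂`, `[X₂,X₃] = X₃`. -/
theorem riccati_vessiot_guldberg_sl2 :
    ∀ x : Fin 4 → ℝ,
      VectorField.lieBracket ℝ (fun _ : Fin 4 → ℝ => fun _ : Fin 4 => (1 : ℝ))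
        (fun y : Fin 4 → ℝ => y) x = (fun _ : Fin 4 => (1 : ℝ)) ∧
      VectorField.lieBracket ℝ (fun _ : Fin 4 → ℝ => fun _ : Fin 4 => (1 : ℝ))
        (fun y : Fin 4 → ℝ => fun i => (y i) ^ 2) x = (2 : ℝ) • x ∧
      VectorField.lieBracket ℝ (fun y : Fin 4 → ℝ => y)
        (fun y : Fin 4 → ℝ => fun i => (y i) ^ 2) x = fun i => (x i) ^ 2 := by
  intro x
  have hconst : fderiv ℝ (fun _ : Fin 4 → ℝ => fun _ : Fin 4 => (1 : ℝ)) x = 0 :=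
    fderiv_const_apply _
  have hid : fderiv ℝ (fun y : Fin 4 → ℝ => y) x = ContinuousLinearMap.id ℝ _ :=
    fderiv_id'
  have hsq : fderiv ℝ (fun y : Fin 4 → ℝ => fun i => (y i) ^ 2) x
      = ContinuousLinearMap.pi fun i => (2 * x i) • ContinuousLinearMap.proj i :=
    (sq_hasFDerivAt x).fderiv
  refine ⟨?_, ?_, ?_⟩ <;>
    simp only [VectorField.lieBracket, hconst, hid, hsq] <;>
    funext i <;>
    simp [ContinuousLinearMap.proj_pi] <;>
    ring
end

section
/- For p = (x,v,a) ∈ ℝ³ with v ≠ 0, let ω₁(p) and ω₂(p) be the alternating bilinear forms on ℝ³ given by ω₁(p)(u,w) = (u₂w₃ − u₃w₂)/v³ and ω₂(p)(u,w) = −(2/v³)(x(u₂w₃ − u₃w₂) + v(u₃w₁ − u₁w₃) + a(u₁w₂ − u₂w₁)). Then their common kernel is trivial: if u ∈ ℝ³ satisfies ω₁(p)(u,w) = 0 and ω₂(p)(u,w) = 0 for all w ∈ ℝ³, then u = 0. Hence (ω₁, ω₂) is a two-symplectic structure on O₂ = {(x,v,a) : v ≠ 0}. -/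
/-- The pointwise two-forms
`ω₁(p)(u,w) = (u₂w₃ − u₃w₂)/v³` and
`ω₂(p)(u,w) = −(2/v³)(x(u₂w₃ − u₃w₂) + v(u₃w₁ − u₁w₃) + a(u₁w₂ − u₂w₁))`
on `ℝ³` (coordinates `(x,v,a) = (p 0, p 1, p 2)`, zero-based indices for
`u, w`) have trivial common kernel at every point of
`O₂ = {(x,v,a) : v ≠ 0}`. -/
theorem schwarzian_two_symplectic_trivial_kernel
    (p : Fin 3 → ℝ) (hv : p 1 ≠ 0) (u : Fin 3 → ℝ)
    (h1 : ∀ w : Fin 3 → ℝ, (u 1 * w 2 - u 2 * w 1) / (p 1) ^ 3 = 0)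
    (h2 : ∀ w : Fin 3 → ℝ,
      -(2 / (p 1) ^ 3) * (p 0 * (u 1 * w 2 - u 2 * w 1)
        + p 1 * (u 2 * w 0 - u 0 * w 2)
        + p 2 * (u 0 * w 1 - u 1 * w 0)) = 0) :
    u = 0 := by
  have hp : (p 1)^3 ≠ 0 := pow_ne_zero _ hv
  have e1 := h1 ![0,0,1]
  have e2 := h1 ![0,1,0]
  simp [div_eq_zero_iff, hp] at e1 e2
  have e3 := h2 ![0,0,1]
  simp [e1, e2, hp, div_eq_zero_iff] at e3
  have e4 : u 0 = 0 := e3.resolve_left hv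
  funext i
  fin_cases i <;> simp [e1, e2, e4]
end

section
/- Let Y₁(x,v,a) = (0,0,2v), Y₂(x,v,a) = (0,v,2a), Y₃(x,v,a) = (v,a,3a²/(2v)) on O₂ = {(x,v,a) ∈ ℝ³ : v ≠ 0}, and let ω₁(p)(u,w) = (u₂w₃ − u₃w₂)/v³ at p = (x,v,a). Then Y₁, Y₂, Y₃ are Hamiltonian with respect to ω₁ with Hamiltonian functions h¹(x,v,a) = 2/v, h²(x,v,a) = a/v², h³(x,v,a) = a²/(2v³): for every p ∈ O₂ and every w ∈ ℝ³, ω₁(p)(Y_α(p), w) = (fderiv ℝ h^α p) w for α = 1, 2, 3. -/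
noncomputable def schwarzY₁ : (Fin 3 → ℝ) → (Fin 3 → ℝ) :=
  fun p => ![0, 0, 2 * p 1]

noncomputable def schwarzY₂ : (Fin 3 → ℝ) → (Fin 3 → ℝ) :=
  fun p => ![0, p 1, 2 * p 2]

noncomputable def schwarzY₃ : (Fin 3 → ℝ) → (Fin 3 → ℝ) :=
  fun p => ![p 1, p 2, 3 * (p 2) ^ 2 / (2 * p 1)]

/-- The first presymplectic form of the two-symplectic structure of the
Schwarzian equation: `ω₁(p)(u,w) = (u₂w₃ − u₃w₂)/v³` in coordinates
`(x,v,a) = (p 0, p 1, p 2)`. -/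
noncomputable def schwarzOmega₁ (p : Fin 3 → ℝ) (u w : Fin 3 → ℝ) : ℝ :=
  (u 1 * w 2 - u 2 * w 1) / (p 1) ^ 3

/-- `Y₁, Y₂, Y₃` are Hamiltonian with respect to `ω₁` with the
Hamiltonian functions `h¹ = 2/v`, `h² = a/v²`, `h³ = a²/(2v³)`. -/
theorem schwarzian_hamiltonian_functions_omega1 :
    ∀ p : Fin 3 → ℝ, p 1 ≠ 0 → ∀ w : Fin 3 → ℝ,
      schwarzOmega₁ p (schwarzY₁ p) w
        = fderiv ℝ (fun q : Fin 3 → ℝ => 2 / q 1) p w ∧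
      schwarzOmega₁ p (schwarzY₂ p) w
        = fderiv ℝ (fun q : Fin 3 → ℝ => q 2 / (q 1) ^ 2) p w ∧
      schwarzOmega₁ p (schwarzY₃ p) w
        = fderiv ℝ (fun q : Fin 3 → ℝ => (q 2) ^ 2 / (2 * (q 1) ^ 3)) p w := by
  intro p hp w
  set P1 : (Fin 3 → ℝ) →L[ℝ] ℝ := ContinuousLinearMap.proj (R := ℝ) (φ := fun _ : Fin 3 => ℝ) 1 with hP1
  set P2 : (Fin 3 → ℝ) →L[ℝ] ℝ := ContinuousLinearMap.proj (R := ℝ) (φ := fun _ : Fin 3 => ℝ) 2 with hP2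
  have hv : HasFDerivAt (fun q : Fin 3 → ℝ => q 1) P1 p := P1.hasFDerivAt
  have ha : HasFDerivAt (fun q : Fin 3 → ℝ => q 2) P2 p := P2.hasFDerivAt
  have hinv : HasFDerivAt (fun q : Fin 3 → ℝ => (q 1)⁻¹) ((-(p 1 ^ 2)⁻¹) • P1) p :=
    (hasDerivAt_inv hp).comp_hasFDerivAt p hv
  have hp2 : p 1 ^ 2 ≠ 0 := pow_ne_zero 2 hp
  have hsq := (hasDerivAt_pow 2 (p 1)).comp_hasFDerivAt p hv
  have hinv2 := (hasDerivAt_inv hp2).comp_hasFDerivAt p hsq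
  have hcube := (hasDerivAt_pow 3 (p 1)).comp_hasFDerivAt p hv
  have hc3 := hcube.const_mul (2 : ℝ)
  have h2c3 : (2 * p 1 ^ 3 : ℝ) ≠ 0 := by
    simp [pow_ne_zero, hp]
  have hinv3 := (hasDerivAt_inv h2c3).comp_hasFDerivAt p hc3
  have hasq := (hasDerivAt_pow 2 (p 2)).comp_hasFDerivAt p ha
  refine ⟨?_, ?_, ?_⟩
  · have heq : (fun q : Fin 3 → ℝ => 2 / q 1)
        = fun q : Fin 3 → ℝ => 2 * (q 1)⁻¹ := funext fun q => by ring
    rw [heq, (hinv.const_mul (2 : ℝ)).fderiv]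
    simp [schwarzOmega₁, schwarzY₁, hP1]
    field_simp
  · have heq : (fun q : Fin 3 → ℝ => q 2 / (q 1) ^ 2)
        = fun q : Fin 3 → ℝ => q 2 * ((fun q : Fin 3 → ℝ => q 1) q ^ 2)⁻¹ :=
      funext fun q => by simp; ring
    have H2 := (ha.mul hinv2).congr_of_eventuallyEq (Filter.EventuallyEq.of_eq heq)
    rw [H2.fderiv]
    simp [schwarzOmega₁, schwarzY₂, hP1, hP2]
    field_simp
    ring
  · have heq : (fun q : Fin 3 → ℝ => (q 2) ^ 2 / (2 * (q 1) ^ 3))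
        = fun q : Fin 3 → ℝ => (fun q : Fin 3 → ℝ => q 2) q ^ 2
            * (2 * (fun q : Fin 3 → ℝ => q 1) q ^ 3)⁻¹ :=
      funext fun q => by simp; ring
    have H3 := (hasq.mul hinv3).congr_of_eventuallyEq (Filter.EventuallyEq.of_eq heq)
    rw [H3.fderiv]
    simp [schwarzOmega₁, schwarzY₃, hP1, hP2]
    field_simp
    ring
end
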